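/- Let k ∈ [0,1], let h be analytic on 𝔻 with Taylor expansion h(z) = Σ_{n=0}^∞ a_n z^n, and let g be analytic on 𝔻 with g(0) = 0, g(z) = Σ_{n=1}^∞ b_n z^n, and |g'(z)| ≤ k|h'(z)| for all z ∈ 𝔻. Then for every r ∈ [0,1), Σ_{n=1}^∞ |b_n|^2 r^{2n} ≤ k^2·Σ_{n=1}^∞ |a_n|^2 r^{2n}. -/

import Mathlib

open MeasureTheory Filter Set AddCircle

set_option linter.unusedSectionVars false
set_option maxHeartbeats 1000000

section Helpers

lemma coeffBound {b : ℕ → ℂ} {g : ℂ → ℂ}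
    (hgs : ∀ z : ℂ, ‖z‖ < 1 → HasSum (fun n : ℕ => b n * z ^ n) (g z))
    {t : ℝ} (ht0 : 0 < t) (ht1 : t < 1) :
    ∃ C : ℝ, 0 ≤ C ∧ ∀ n, ‖b n‖ ≤ C / t ^ n := by
  have hz : ‖(t : ℂ)‖ < 1 := by
    simpa [Complex.norm_real, abs_of_pos ht0] using ht1
  have hsum := (hgs t hz).summable
  have htend : Tendsto (fun n => ‖b n * (t:ℂ) ^ n‖) atTop (nhds 0) := by
    simpa using (hsum.tendsto_atTop_zero.norm)
  obtain ⟨C, hC⟩ := htend.bddAbove_range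
  refine ⟨C, le_trans (norm_nonneg _) (hC ⟨0, rfl⟩), fun n => ?_⟩
  have h1 : ‖b n * (t:ℂ)^n‖ ≤ C := hC ⟨n, rfl⟩
  have h2 : ‖b n * (t:ℂ)^n‖ = ‖b n‖ * t ^ n := by
    simp [norm_mul, norm_pow, Complex.norm_real, abs_of_pos ht0]
  rw [h2] at h1
  rw [le_div_iff₀ (by positivity)]
  exact h1

lemma summable_linear_geom {q : ℝ} (h1 : |q| < 1) :
    Summable (fun n : ℕ => ((n : ℝ) + 1) * q ^ n) := by
  have h := summable_pow_mul_geometric_of_norm_lt_one 1 (r := q) (by simpa using h1)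
  have h2 := summable_geometric_of_norm_lt_one (x := q) (by simpa using h1)
  simpa [add_mul, pow_one] using h.add h2

lemma deriv_hasSum {b : ℕ → ℂ} {g : ℂ → ℂ}
    (hgs : ∀ z : ℂ, ‖z‖ < 1 → HasSum (fun n : ℕ => b n * z ^ n) (g z))
    {z : ℂ} (hz : ‖z‖ < 1) :
    HasSum (fun n : ℕ => ((n : ℂ) + 1) * b (n + 1) * z ^ n) (deriv g z) := by
  set ρ : ℝ := (‖z‖ + 1) / 2 with hρ
  have hz0 : 0 ≤ ‖z‖ := norm_nonneg z
  have hρ0 : 0 < ρ := by positivity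
  have hzρ : ‖z‖ < ρ := by simp only [hρ]; linarith
  have hρ1 : ρ < 1 := by simp only [hρ]; linarith
  set t : ℝ := (ρ + 1) / 2 with ht
  have ht0 : 0 < t := by positivity
  have hρt : ρ < t := by simp only [ht]; linarith
  have ht1 : t < 1 := by simp only [ht]; linarith
  obtain ⟨C, hC0, hC⟩ := coeffBound hgs ht0 ht1
  -- the bound sequence
  set u : ℕ → ℝ := fun n => (n : ℝ) * (C / t ^ n) * ρ ^ (n - 1) with hu
  have husum : Summable u := by
    rw [← summable_nat_add_iff 1]
    have base : Summable (fun n : ℕ => ((n : ℝ) + 1) * (ρ / t) ^ n) :=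
      summable_linear_geom (by
        rw [abs_of_nonneg (by positivity)]
        exact (div_lt_one ht0).mpr hρt)
    have := (base.mul_right (C / t))
    apply this.congr
    intro n
    simp only [hu]
    rw [Nat.add_sub_cancel]
    push_cast
    field_simp
    have htt : t ^ n * t⁻¹ ^ n = 1 := by rw [← mul_pow, mul_inv_cancel₀ ht0.ne', one_pow]
    rw [div_pow, pow_succ, div_mul_eq_mul_div, div_mul_eq_mul_div, div_eq_iff (by positivity)]
    ring
  have hball : IsOpen (Metric.ball (0:ℂ) ρ) := Metric.isOpen_ball
  have hpre : IsPreconnected (Metric.ball (0:ℂ) ρ) := (convex_ball _ _).isPreconnected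
  have hderiv : ∀ (n : ℕ) (y : ℂ), y ∈ Metric.ball (0:ℂ) ρ →
      HasDerivAt (fun y => b n * y ^ n) (b n * ((n : ℂ) * y ^ (n - 1))) y :=
    fun n y _ => (hasDerivAt_pow n y).const_mul (b n)
  have hbound : ∀ (n : ℕ) (y : ℂ), y ∈ Metric.ball (0:ℂ) ρ →
      ‖b n * ((n : ℂ) * y ^ (n - 1))‖ ≤ u n := by
    intro n y hy
    have hyρ : ‖y‖ ≤ ρ := by
      have := Metric.mem_ball.mp hy
      rw [dist_zero_right] at this
      exact this.le
    have : ‖b n * ((n : ℂ) * y ^ (n - 1))‖ = (n : ℝ) * ‖b n‖ * ‖y‖ ^ (n - 1) := by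
      simp [norm_mul, norm_pow]
      ring
    rw [this, hu]
    have h1 : ‖y‖ ^ (n - 1) ≤ ρ ^ (n - 1) := pow_le_pow_left₀ (norm_nonneg y) hyρ _
    have h2 : ‖b n‖ ≤ C / t ^ n := hC n
    have : (n : ℝ) * ‖b n‖ * ‖y‖ ^ (n - 1) ≤ (n : ℝ) * (C / t ^ n) * ρ ^ (n - 1) := by
      apply mul_le_mul
      · exact mul_le_mul_of_nonneg_left h2 (Nat.cast_nonneg n)
      · exact h1
      · positivity
      · positivity
    exact this
  have hz00 : (0 : ℂ) ∈ Metric.ball (0:ℂ) ρ := by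
    simp [Metric.mem_ball, hρ0]
  have hzρ' : z ∈ Metric.ball (0:ℂ) ρ := by
    simpa [Metric.mem_ball, dist_zero_right] using hzρ
  have h0sum : Summable (fun n : ℕ => b n * (0:ℂ) ^ n) :=
    (hgs 0 (by simp)).summable
  have hda : HasDerivAt (fun y : ℂ => ∑' n : ℕ, b n * y ^ n)
      (∑' n : ℕ, b n * ((n : ℂ) * z ^ (n - 1))) z :=
    hasDerivAt_tsum_of_isPreconnected husum hball hpre hderiv hbound hz00 h0sum hzρ'
  -- transfer to g
  have heq : (fun y : ℂ => ∑' n : ℕ, b n * y ^ n) =ᶠ[nhds z] g := by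
    have hmem : Metric.ball (0:ℂ) 1 ∈ nhds z :=
      Metric.isOpen_ball.mem_nhds (by simpa [Metric.mem_ball, dist_zero_right] using hz)
    filter_upwards [hmem] with y hy
    exact (hgs y (by simpa [Metric.mem_ball, dist_zero_right] using hy)).tsum_eq
  have hdg : HasDerivAt g (∑' n : ℕ, b n * ((n : ℂ) * z ^ (n - 1))) z :=
    (Filter.EventuallyEq.hasDerivAt_iff heq).mp hda
  have hdval : deriv g z = ∑' n : ℕ, b n * ((n : ℂ) * z ^ (n - 1)) := hdg.deriv
  -- summability of the derivative series
  have hwsum : Summable (fun n : ℕ => b n * ((n : ℂ) * z ^ (n - 1))) :=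
    Summable.of_norm (husum.of_nonneg_of_le (fun n => norm_nonneg _)
      (fun n => hbound n z hzρ'))
  have hws : HasSum (fun n : ℕ => b n * ((n : ℂ) * z ^ (n - 1))) (deriv g z) := by
    rw [hdval]; exact hwsum.hasSum
  have hshift : HasSum (fun n : ℕ => b (n + 1) * (((n : ℂ) + 1) * z ^ n)) (deriv g z) := by
    have h2 := (hasSum_nat_add_iff' (f := fun n : ℕ => b n * ((n : ℂ) * z ^ (n - 1))) 1).mpr hws
    simpa using h2
  have hfun : (fun n : ℕ => ((n : ℂ) + 1) * b (n + 1) * z ^ n)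
      = fun n : ℕ => b (n + 1) * (((n : ℂ) + 1) * z ^ n) := by
    funext n; ring
  rw [hfun]
  exact hshift

variable {T : ℝ} [hT : Fact (0 < T)]

lemma fourierCoeff_fourier' (j i : ℤ) :
    fourierCoeff (⇑(fourier j) : AddCircle T → ℂ) i = if i = j then 1 else 0 := by
  classical
  have h1 : fourierCoeff (↑↑(fourierLp 2 (T := T) j)) i = fourierCoeff (⇑(fourier j)) i :=
    fourierCoeff_toLp (fourier j) i
  have h2 : (fourierBasis (T := T)).repr (fourierLp 2 j) i
      = fourierCoeff (↑↑(fourierLp 2 (T := T) j)) i := fourierBasis_repr (fourierLp 2 j) i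
  have h3 : fourierBasis (T := T) j = fourierLp 2 j := congr_fun coe_fourierBasis j
  have h4 := (fourierBasis (T := T)).repr_self j
  rw [← h1, ← h2]
  have h5 : (fourierBasis (T := T)).repr (fourierLp 2 j) = lp.single 2 j 1 := by
    rw [← h3]; exact h4
  rw [h5, lp.single_apply]
  simp [eq_comm, Pi.single_apply]

lemma integral_fourier' (m : ℤ) :
    ∫ x : AddCircle T, fourier m x ∂haarAddCircle = if m = 0 then 1 else 0 := by
  have := fourierCoeff_fourier' (T := T) m 0
  rw [fourierCoeff] at this
  simpa [eq_comm] using this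

lemma norm_fourier_apply (n : ℤ) (x : AddCircle T) : ‖fourier n x‖ = 1 := by
  simp [fourier_apply, Circle.norm_coe]

/-- Parseval-type identity for power-series-like sums on the circle. -/
lemma parseval_sum (c : ℕ → ℂ) (hc : Summable c) :
    ∑' n : ℕ, ‖c n‖ ^ 2
      = ∫ x : AddCircle T, ‖∑' n : ℕ, c n * fourier (n : ℤ) x‖ ^ 2 ∂haarAddCircle := by
  classical
  set c' : ℤ → ℂ := fun i => (Int.rec (fun n => c n) (fun _ => 0) i : ℂ) with hc'def
  have hnorm : Summable fun n => ‖c n‖ := hc.norm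
  have hc'norm : Summable fun i => ‖c' i‖ := by
    have := (hnorm.hasSum.int_rec (g := fun _ : ℕ => (0:ℝ)) hasSum_zero)
    refine this.summable.congr fun i => ?_
    rcases i with n | n
    · rfl
    · simp [hc'def]
  have hc'sum : Summable c' := Summable.of_norm hc'norm
  have hFsummable : Summable (fun i : ℤ => c' i • (fourier i : C(AddCircle T, ℂ))) := by
    apply Summable.of_norm
    refine hc'norm.congr fun i => ?_
    rw [norm_smul, fourier_norm, mul_one]
  set F : C(AddCircle T, ℂ) := ∑' i : ℤ, c' i • (fourier i : C(AddCircle T, ℂ)) with hFdef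
  have hFsum : HasSum (fun i : ℤ => c' i • (fourier i : C(AddCircle T, ℂ))) F :=
    hFsummable.hasSum
  have hFx : ∀ x : AddCircle T, HasSum (fun i : ℤ => c' i * fourier i x) (F x) := by
    intro x
    have h := (ContinuousMap.evalCLM ℂ x).hasSum hFsum
    refine h.congr_fun fun i => ?_
    simp [ContinuousMap.evalCLM, smul_eq_mul]
  have hFeq : ∀ x : AddCircle T, F x = ∑' n : ℕ, c n * fourier (n : ℤ) x := by
    intro x
    have hns : Summable fun n : ℕ => c n * fourier (n : ℤ) x := by
      apply Summable.of_norm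
      refine hnorm.congr fun n => ?_
      rw [norm_mul, norm_fourier_apply, mul_one]
    have h2 := hns.hasSum.int_rec (g := fun _ : ℕ => (0:ℂ)) hasSum_zero
    rw [add_zero] at h2
    have h3 : HasSum (fun i : ℤ => c' i * fourier i x)
        (∑' n : ℕ, c n * fourier (n : ℤ) x) := by
      refine h2.congr_fun fun i => ?_
      rcases i with n | n
      · rfl
      · simp [hc'def]
    exact (hFx x).unique h3
  -- Fourier coefficients of F
  have hcoeff : ∀ i : ℤ, fourierCoeff (⇑F) i = c' i := by
    intro i
    have hint : ∀ x : AddCircle T, (fourier (-i) x : ℂ) • F x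
        = ∑' j : ℤ, c' j * fourier (j + -i) x := by
      intro x
      have h := (hFx x).mul_left (fourier (-i) x)
      have h3 : HasSum (fun j : ℤ => c' j * fourier (j + -i) x) (fourier (-i) x * F x) := by
        refine h.congr_fun fun j => ?_
        rw [fourier_add]; ring
      rw [smul_eq_mul]
      exact h3.tsum_eq.symm
    have hmeas : ∀ j : ℤ, AEStronglyMeasurable
        (fun x : AddCircle T => c' j * fourier (j + -i) x) haarAddCircle :=
      fun j => (continuous_const.mul (map_continuous (fourier _))).aestronglyMeasurable
    have hlint : ∀ j : ℤ, ∫⁻ x : AddCircle T, ‖c' j * fourier (j + -i) x‖₊ ∂haarAddCircle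
        = (‖c' j‖₊ : ENNReal) := by
      intro j
      have : ∀ x : AddCircle T, (‖c' j * fourier (j + -i) x‖₊ : ENNReal) = (‖c' j‖₊ : ENNReal) := by
        intro x
        have : ‖c' j * fourier (j + -i) x‖ = ‖c' j‖ := by
          rw [norm_mul, norm_fourier_apply, mul_one]
        simp [nnnorm, this, Circle.norm_coe]
      simp_rw [this]
      simp [lintegral_const]
    have hfin : ∑' j : ℤ, ∫⁻ x : AddCircle T, ‖c' j * fourier (j + -i) x‖₊ ∂haarAddCircle ≠ ⊤ := by
      simp_rw [hlint]
      rw [ENNReal.tsum_coe_ne_top_iff_summable]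
      have : (fun j : ℤ => (‖c' j‖₊ : ℝ)) = fun j => ‖c' j‖ := by
        funext j; simp
      rw [← NNReal.summable_coe, this]
      exact hc'norm
    have : fourierCoeff (⇑F) i = ∑' j : ℤ, ∫ x : AddCircle T, c' j * fourier (j + -i) x ∂haarAddCircle := by
      rw [fourierCoeff]
      rw [show (fun x : AddCircle T => (fourier (-i) x : ℂ) • F x)
            = fun x => ∑' j : ℤ, c' j * fourier (j + -i) x from funext hint] at *
      · exact integral_tsum hmeas hfin
    rw [this]
    have hterm : ∀ j : ℤ, ∫ x : AddCircle T, c' j * fourier (j + -i) x ∂haarAddCircle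
        = c' j * (if j = i then 1 else 0) := by
      intro j
      rw [MeasureTheory.integral_const_mul, integral_fourier']
      congr 1
      simp [add_neg_eq_zero]
    simp_rw [hterm]
    rw [tsum_eq_single i (by intro j hj; simp [hj])]
    simp
  -- Parseval
  have hpars := tsum_sq_fourierCoeff (T := T) (ContinuousMap.toLp 2 haarAddCircle ℂ F)
  have hL : ∑' i : ℤ, ‖fourierCoeff (↑↑(ContinuousMap.toLp 2 haarAddCircle ℂ F)) i‖ ^ 2
      = ∑' i : ℤ, ‖c' i‖ ^ 2 := by
    congr 1; funext i
    rw [fourierCoeff_toLp F i, hcoeff i]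
  have hR : ∫ t : AddCircle T, ‖(↑↑(ContinuousMap.toLp 2 haarAddCircle ℂ F) : AddCircle T → ℂ) t‖ ^ 2 ∂haarAddCircle
      = ∫ t : AddCircle T, ‖∑' n : ℕ, c n * fourier (n : ℤ) t‖ ^ 2 ∂haarAddCircle := by
    apply integral_congr_ae
    filter_upwards [ContinuousMap.coeFn_toLp (p := 2) (μ := haarAddCircle) (𝕜 := ℂ) F] with t ht
    rw [ht, hFeq t]
  -- summability of squares
  have hsq : Summable fun n : ℕ => ‖c n‖ ^ 2 := by
    obtain ⟨M, hM⟩ := hnorm.tendsto_atTop_zero.bddAbove_range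
    refine Summable.of_nonneg_of_le (fun n => sq_nonneg _) (fun n => ?_) (hnorm.mul_left M)
    have h1 : ‖c n‖ ≤ M := hM ⟨n, rfl⟩
    calc ‖c n‖ ^ 2 = ‖c n‖ * ‖c n‖ := sq ‖c n‖
    _ ≤ M * ‖c n‖ := mul_le_mul_of_nonneg_right h1 (norm_nonneg _)
  have hZN : ∑' i : ℤ, ‖c' i‖ ^ 2 = ∑' n : ℕ, ‖c n‖ ^ 2 := by
    have h2 := hsq.hasSum.int_rec (g := fun _ : ℕ => (0:ℝ)) hasSum_zero
    rw [add_zero] at h2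
    have h3 : HasSum (fun i : ℤ => ‖c' i‖ ^ 2) (∑' n : ℕ, ‖c n‖ ^ 2) := by
      refine h2.congr_fun fun i => ?_
      rcases i with n | n
      · rfl
      · simp [hc'def]
    exact h3.tsum_eq
  rw [← hZN, ← hL, hpars, hR]

lemma summable_deriv_coeff {b : ℕ → ℂ} {g : ℂ → ℂ}
    (hgs : ∀ z : ℂ, ‖z‖ < 1 → HasSum (fun n : ℕ => b n * z ^ n) (g z))
    {ρ : ℝ} (hρ0 : 0 < ρ) (hρ1 : ρ < 1) :
    Summable (fun n : ℕ => ((n : ℂ) + 1) * b (n + 1) * (ρ : ℂ) ^ n) := by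
  set t : ℝ := (ρ + 1) / 2 with ht
  have ht0 : 0 < t := by positivity
  have hρt : ρ < t := by simp only [ht]; linarith
  have ht1 : t < 1 := by simp only [ht]; linarith
  obtain ⟨C, hC0, hC⟩ := coeffBound hgs ht0 ht1
  apply Summable.of_norm
  have base : Summable (fun n : ℕ => ((n : ℝ) + 1) * (ρ / t) ^ n) :=
    summable_linear_geom (by rw [abs_of_nonneg (by positivity)]; exact (div_lt_one ht0).mpr hρt)
  refine Summable.of_nonneg_of_le (fun n => norm_nonneg _) (fun n => ?_) (base.mul_right (C / t))
  have hnorm : ‖((n : ℂ) + 1) * b (n + 1) * (ρ : ℂ) ^ n‖ = ((n : ℝ) + 1) * ‖b (n + 1)‖ * ρ ^ n := by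
    rw [norm_mul, norm_mul, norm_pow]
    congr
    · have : ((n : ℂ) + 1) = ((n + 1 : ℕ) : ℂ) := by push_cast; ring
      rw [this, Complex.norm_natCast]; push_cast; ring
    · simp [Complex.norm_real, abs_of_pos hρ0]
  rw [hnorm]
  have h1 : ‖b (n + 1)‖ ≤ C / t ^ (n + 1) := hC (n + 1)
  calc ((n : ℝ) + 1) * ‖b (n + 1)‖ * ρ ^ n
      ≤ ((n : ℝ) + 1) * (C / t ^ (n + 1)) * ρ ^ n := by
        apply mul_le_mul_of_nonneg_right _ (by positivity)
        exact mul_le_mul_of_nonneg_left h1 (by positivity)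
    _ = ((n : ℝ) + 1) * (ρ / t) ^ n * (C / t) := by
        field_simp
        have htt : t ^ n * t⁻¹ ^ n = 1 := by rw [← mul_pow, mul_inv_cancel₀ ht0.ne', one_pow]
        linear_combination (-(C * ρ ^ n * t)) * htt

lemma norm_coeff_sq {β : ℕ → ℂ} {ρ : ℝ} (hρ0 : 0 < ρ) (n : ℕ) :
    ‖((n : ℂ) + 1) * β (n + 1) * (ρ : ℂ) ^ n‖ ^ 2
      = ((n : ℝ) + 1) ^ 2 * ‖β (n + 1)‖ ^ 2 * ρ ^ (2 * n) := by
  rw [norm_mul, norm_mul, norm_pow]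
  have h1 : ‖((n : ℂ) + 1)‖ = (n : ℝ) + 1 := by
    have : ((n : ℂ) + 1) = ((n + 1 : ℕ) : ℂ) := by push_cast; ring
    rw [this, Complex.norm_natCast]; push_cast; ring
  have h2 : ‖(ρ : ℂ)‖ = ρ := by simp [Complex.norm_real, abs_of_pos hρ0]
  rw [h1, h2]
  rw [mul_pow, mul_pow, ← pow_mul]
  ring_nf

lemma parseval_ineq (k : ℝ) (hk0 : 0 ≤ k)
    (h g : ℂ → ℂ) (a b : ℕ → ℂ)
    (hh : ∀ z : ℂ, ‖z‖ < 1 → HasSum (fun n : ℕ => a n * z ^ n) (h z))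
    (hgs : ∀ z : ℂ, ‖z‖ < 1 → HasSum (fun n : ℕ => b n * z ^ n) (g z))
    (hder : ∀ z : ℂ, ‖z‖ < 1 → ‖deriv g z‖ ≤ k * ‖deriv h z‖)
    {ρ : ℝ} (hρ0 : 0 < ρ) (hρ1 : ρ < 1) :
    ∑' n : ℕ, ((n : ℝ) + 1) ^ 2 * ‖b (n + 1)‖ ^ 2 * ρ ^ (2 * n)
      ≤ k ^ 2 * ∑' n : ℕ, ((n : ℝ) + 1) ^ 2 * ‖a (n + 1)‖ ^ 2 * ρ ^ (2 * n) := by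
  haveI : Fact (0 < 2 * Real.pi) := ⟨Real.two_pi_pos⟩
  set cb : ℕ → ℂ := fun n => ((n : ℂ) + 1) * b (n + 1) * (ρ : ℂ) ^ n with hcb
  set ca : ℕ → ℂ := fun n => ((n : ℂ) + 1) * a (n + 1) * (ρ : ℂ) ^ n with hca
  have hcbs : Summable cb := summable_deriv_coeff hgs hρ0 hρ1
  have hcas : Summable ca := summable_deriv_coeff hh hρ0 hρ1
  have hbP := parseval_sum (T := 2 * Real.pi) cb hcbs
  have haP := parseval_sum (T := 2 * Real.pi) ca hcas
  -- pointwise evaluation of the sums on the circle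
  have hval : ∀ (β : ℕ → ℂ) (G : ℂ → ℂ),
      (∀ z : ℂ, ‖z‖ < 1 → HasSum (fun n : ℕ => β n * z ^ n) (G z)) →
      ∀ θ : ℝ, (∑' n : ℕ, (((n : ℂ) + 1) * β (n + 1) * (ρ : ℂ) ^ n) * fourier (n : ℤ) (θ : AddCircle (2 * Real.pi)))
        = deriv G ((ρ : ℂ) * Complex.exp (θ * Complex.I)) := by
    intro β G hGs θ
    set z : ℂ := (ρ : ℂ) * Complex.exp (θ * Complex.I) with hz
    have hexp1 : ‖Complex.exp ((θ:ℂ) * Complex.I)‖ = 1 := by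
      simpa using Complex.abs_exp_ofReal_mul_I θ
    have hznorm : ‖z‖ < 1 := by
      rw [hz, norm_mul, hexp1, mul_one, Complex.norm_real, Real.norm_eq_abs, abs_of_pos hρ0]
      exact hρ1
    have hds := deriv_hasSum hGs hznorm
    rw [← hds.tsum_eq]
    apply tsum_congr
    intro n
    have hzpow : z ^ n = (ρ:ℂ)^n * Complex.exp ((n:ℂ) * ((θ:ℂ) * Complex.I)) := by
      rw [hz, mul_pow, ← Complex.exp_nat_mul]
    have harg : (2 * (Real.pi:ℂ) * Complex.I * (((n:ℕ):ℤ):ℂ) * (θ:ℂ)) / (((2 * Real.pi : ℝ)):ℂ)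
        = (n:ℂ) * ((θ:ℂ) * Complex.I) := by
      have hπ : (Real.pi : ℂ) ≠ 0 := by exact_mod_cast Real.pi_ne_zero
      push_cast
      field_simp
    rw [fourier_coe_apply, hzpow, harg]
    ring
  -- continuity and integrability
  have hnormf : ∀ (n : ℤ) (x : AddCircle (2 * Real.pi)), ‖fourier n x‖ = 1 := by
    intro n x; simp [fourier_apply, Circle.norm_coe]
  have hcont : ∀ (c : ℕ → ℂ), Summable c →
      Continuous (fun x : AddCircle (2 * Real.pi) => ∑' n : ℕ, c n * fourier (n : ℤ) x) := by
    intro c hc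
    apply continuous_tsum (fun n => continuous_const.mul (map_continuous (fourier _))) hc.norm
    intro n x
    rw [Pi.mul_apply, norm_mul, hnormf, mul_one]
  have hcompact : ∀ (f : AddCircle (2 * Real.pi) → ℝ), Continuous f →
      Integrable f (haarAddCircle (T := 2 * Real.pi)) := fun f hf =>
    hf.integrable_of_hasCompactSupport (HasCompactSupport.of_compactSpace f)
  have hintb : Integrable (fun x : AddCircle (2 * Real.pi) =>
      ‖∑' n : ℕ, cb n * fourier (n : ℤ) x‖ ^ 2) haarAddCircle :=
    hcompact _ (((hcont cb hcbs).norm).pow 2)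
  have hinta : Integrable (fun x : AddCircle (2 * Real.pi) =>
      k ^ 2 * ‖∑' n : ℕ, ca n * fourier (n : ℤ) x‖ ^ 2) haarAddCircle :=
    hcompact _ (continuous_const.mul (((hcont ca hcas).norm).pow 2))
  have hpointwise : ∀ x : AddCircle (2 * Real.pi),
      ‖∑' n : ℕ, cb n * fourier (n : ℤ) x‖ ^ 2 ≤ k ^ 2 * ‖∑' n : ℕ, ca n * fourier (n : ℤ) x‖ ^ 2 := by
    intro x
    induction x using QuotientAddGroup.induction_on with
    | H θ =>
      rw [hval b g hgs θ, hval a h hh θ]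
      have hexp1 : ‖Complex.exp ((θ:ℂ) * Complex.I)‖ = 1 := by
        simpa using Complex.abs_exp_ofReal_mul_I θ
      have hznorm : ‖(ρ : ℂ) * Complex.exp ((θ:ℂ) * Complex.I)‖ < 1 := by
        rw [norm_mul, hexp1, mul_one, Complex.norm_real, Real.norm_eq_abs, abs_of_pos hρ0]
        exact hρ1
      have := hder _ hznorm
      calc ‖deriv g ((ρ:ℂ) * Complex.exp ((θ:ℂ) * Complex.I))‖ ^ 2
          ≤ (k * ‖deriv h ((ρ:ℂ) * Complex.exp ((θ:ℂ) * Complex.I))‖) ^ 2 :=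
            pow_le_pow_left₀ (norm_nonneg _) this 2
        _ = k ^ 2 * ‖deriv h ((ρ:ℂ) * Complex.exp ((θ:ℂ) * Complex.I))‖ ^ 2 := by ring
  calc ∑' n : ℕ, ((n : ℝ) + 1) ^ 2 * ‖b (n + 1)‖ ^ 2 * ρ ^ (2 * n)
      = ∑' n : ℕ, ‖cb n‖ ^ 2 := (tsum_congr fun n => (norm_coeff_sq hρ0 n)).symm
    _ = ∫ x : AddCircle (2 * Real.pi), ‖∑' n : ℕ, cb n * fourier (n : ℤ) x‖ ^ 2 ∂haarAddCircle := hbP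
    _ ≤ ∫ x : AddCircle (2 * Real.pi), k ^ 2 * ‖∑' n : ℕ, ca n * fourier (n : ℤ) x‖ ^ 2 ∂haarAddCircle :=
        integral_mono hintb hinta hpointwise
    _ = k ^ 2 * ∫ x : AddCircle (2 * Real.pi), ‖∑' n : ℕ, ca n * fourier (n : ℤ) x‖ ^ 2 ∂haarAddCircle :=
        MeasureTheory.integral_const_mul _ _
    _ = k ^ 2 * ∑' n : ℕ, ‖ca n‖ ^ 2 := by rw [haP]
    _ = k ^ 2 * ∑' n : ℕ, ((n : ℝ) + 1) ^ 2 * ‖a (n + 1)‖ ^ 2 * ρ ^ (2 * n) := by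
        rw [tsum_congr fun n => (norm_coeff_sq hρ0 n)]

/-- Term-by-term integration of a power series with nonnegative coefficients. -/
lemma swapL (v : ℕ → ℝ) (hv : ∀ n, 0 ≤ v n) {t : ℝ} (ht0 : 0 < t)
    (hsum : Summable (fun n : ℕ => v n * t ^ (2 * n + 2))) :
    ∫⁻ ρ in Ioo (0:ℝ) t, ENNReal.ofReal (∑' n : ℕ, (2 * (n:ℝ) + 2) * v n * ρ ^ (2 * n + 1))
      = ENNReal.ofReal (∑' n : ℕ, v n * t ^ (2 * n + 2)) := by
  obtain ⟨C, hC⟩ := hsum.tendsto_atTop_zero.bddAbove_range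
  have hCn : ∀ n, v n * t ^ (2 * n + 2) ≤ C := fun n => hC ⟨n, rfl⟩
  have hinner : ∀ ρ ∈ Ioo (0:ℝ) t,
      Summable (fun n : ℕ => (2 * (n:ℝ) + 2) * v n * ρ ^ (2 * n + 1)) := by
    intro ρ hρ
    obtain ⟨hρ0, hρt⟩ := hρ
    set s : ℝ := ρ / t with hs
    have hs0 : 0 < s := by positivity
    have hs1 : s < 1 := (div_lt_one ht0).mpr hρt
    have base : Summable (fun n : ℕ => ((n:ℝ) + 1) * (s ^ 2) ^ n) :=
      summable_linear_geom (by rw [abs_of_nonneg (by positivity)]; nlinarith)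
    refine Summable.of_nonneg_of_le
      (fun n => mul_nonneg (mul_nonneg (by positivity) (hv n)) (by positivity)) (fun n => ?_)
      (base.mul_right (2 * C * s / t))
    have h1 : v n ≤ C / t ^ (2 * n + 2) := by
      rw [le_div_iff₀ (by positivity)]; exact hCn n
    calc (2 * (n:ℝ) + 2) * v n * ρ ^ (2 * n + 1)
        ≤ (2 * (n:ℝ) + 2) * (C / t ^ (2 * n + 2)) * ρ ^ (2 * n + 1) := by
          apply mul_le_mul_of_nonneg_right _ (by positivity)
          exact mul_le_mul_of_nonneg_left h1 (by positivity)
      _ = ((n:ℝ) + 1) * (s ^ 2) ^ n * (2 * C * s / t) := by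
          have e1 : ρ ^ (2 * n + 1) = ρ ^ (2 * n) * ρ := pow_succ ρ (2 * n)
          have e2 : t ^ (2 * n + 2) = t ^ (2 * n) * t ^ 2 := by rw [← pow_add]
          have e3 : (s ^ 2) ^ n = ρ ^ (2 * n) / t ^ (2 * n) := by
            rw [hs, div_pow, div_pow, ← pow_mul, ← pow_mul]
          rw [e1, e2, e3, hs]
          have htn : (t : ℝ) ^ (2 * n) ≠ 0 := by positivity
          field_simp
  have hterm : ∀ n : ℕ,
      ∫⁻ ρ in Ioo (0:ℝ) t, ENNReal.ofReal ((2 * (n:ℝ) + 2) * v n * ρ ^ (2 * n + 1))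
        = ENNReal.ofReal (v n * t ^ (2 * n + 2)) := by
    intro n
    rw [Measure.restrict_congr_set Ioo_ae_eq_Ioc]
    rw [← MeasureTheory.ofReal_integral_eq_lintegral_ofReal]
    · congr 1
      rw [← intervalIntegral.integral_of_le ht0.le]
      have : ∀ x : ℝ, (2 * (n:ℝ) + 2) * v n * x ^ (2 * n + 1)
          = ((2 * (n:ℝ) + 2) * v n) * x ^ (2 * n + 1) := fun x => by ring
      rw [intervalIntegral.integral_congr (fun x _ => this x)]
      rw [intervalIntegral.integral_const_mul, integral_pow]
      have : (2 * (n:ℝ) + 1 + 1) ≠ 0 := by positivity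
      push_cast
      field_simp
      ring
    · apply Continuous.integrableOn_Ioc
      continuity
    · filter_upwards [ae_restrict_mem measurableSet_Ioc] with ρ hρ
      have hρ0 : (0:ℝ) < ρ := hρ.1
      exact mul_nonneg (mul_nonneg (by positivity) (hv n)) (by positivity)
  calc ∫⁻ ρ in Ioo (0:ℝ) t, ENNReal.ofReal (∑' n : ℕ, (2 * (n:ℝ) + 2) * v n * ρ ^ (2 * n + 1))
      = ∫⁻ ρ in Ioo (0:ℝ) t, ∑' n : ℕ, ENNReal.ofReal ((2 * (n:ℝ) + 2) * v n * ρ ^ (2 * n + 1)) := by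
        apply setLIntegral_congr_fun_ae measurableSet_Ioo
        apply ae_of_all
        intro ρ hρ
        exact ENNReal.ofReal_tsum_of_nonneg
          (fun n => mul_nonneg (mul_nonneg (by positivity) (hv n)) (by have := hρ.1; positivity))
          (hinner ρ hρ)
    _ = ∑' n : ℕ, ∫⁻ ρ in Ioo (0:ℝ) t, ENNReal.ofReal ((2 * (n:ℝ) + 2) * v n * ρ ^ (2 * n + 1)) := by
        apply lintegral_tsum
        intro n
        apply Measurable.aemeasurable
        apply Measurable.ennreal_ofReal
        exact (measurable_id.pow_const _).const_mul _
    _ = ∑' n : ℕ, ENNReal.ofReal (v n * t ^ (2 * n + 2)) := tsum_congr hterm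
    _ = ENNReal.ofReal (∑' n : ℕ, v n * t ^ (2 * n + 2)) :=
        (ENNReal.ofReal_tsum_of_nonneg (fun n => mul_nonneg (hv n) (by positivity)) hsum).symm

lemma summable_sq_coeff {β : ℕ → ℂ} {G : ℂ → ℂ}
    (hβ : ∀ z : ℂ, ‖z‖ < 1 → HasSum (fun n : ℕ => β n * z ^ n) (G z))
    {t : ℝ} (ht0 : 0 < t) (ht1 : t < 1) :
    Summable (fun n : ℕ => (2 * (n:ℝ) + 2) * ‖β (n+1)‖ ^ 2 * t ^ (2*n+2)) := by
  set T0 : ℝ := (t + 1) / 2 with hT0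
  have hT00 : 0 < T0 := by positivity
  have htT0 : t < T0 := by simp only [hT0]; linarith
  have hT01 : T0 < 1 := by simp only [hT0]; linarith
  obtain ⟨C, hC0, hC⟩ := coeffBound hβ hT00 hT01
  set q : ℝ := (t / T0) ^ 2 with hq
  have hq0 : 0 < q := by positivity
  have hq1 : q < 1 := by
    have : t / T0 < 1 := (div_lt_one hT00).mpr htT0
    nlinarith [div_pos ht0 hT00]
  have base : Summable (fun n : ℕ => ((n:ℝ) + 1) * q ^ n) :=
    summable_linear_geom (by rw [abs_of_nonneg hq0.le]; exact hq1)
  refine Summable.of_nonneg_of_le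
    (fun n => mul_nonneg (mul_nonneg (by positivity) (by positivity)) (by positivity))
    (fun n => ?_) (base.mul_right (2 * C^2 * q))
  have h1 : ‖β (n+1)‖ ^ 2 ≤ (C / T0 ^ (n+1)) ^ 2 :=
    pow_le_pow_left₀ (norm_nonneg _) (hC (n+1)) 2
  calc (2 * (n:ℝ) + 2) * ‖β (n+1)‖ ^ 2 * t ^ (2*n+2)
      ≤ (2 * (n:ℝ) + 2) * (C / T0 ^ (n+1)) ^ 2 * t ^ (2*n+2) := by
        apply mul_le_mul_of_nonneg_right _ (by positivity)
        exact mul_le_mul_of_nonneg_left h1 (by positivity)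
    _ = ((n:ℝ) + 1) * q ^ n * (2 * C^2 * q) := by
        have e1 : (C / T0 ^ (n+1)) ^ 2 = C^2 / T0 ^ (2*n+2) := by
          rw [div_pow, ← pow_mul, show (n+1)*2 = 2*n+2 from by ring]
        have e2 : (q:ℝ) ^ n = t ^ (2*n) / T0 ^ (2*n) := by
          rw [hq, div_pow, div_pow, ← pow_mul, ← pow_mul]
        rw [e1, e2, hq]
        rw [show t ^ (2*n+2) = t ^ (2*n) * t^2 from by rw [← pow_add],
          show T0 ^ (2*n+2) = T0 ^ (2*n) * T0^2 from by rw [← pow_add], div_pow]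
        field_simp


end Helpers

/-- If `h(z) = Σ_{n≥0} a_n z^n` and `g(z) = Σ_{n≥1} b_n z^n` are analytic on `𝔻` with
`g(0) = 0` and `|g'(z)| ≤ k|h'(z)|` on `𝔻` for some `k ∈ [0,1]`, then for every
`r ∈ [0,1)` one has `Σ_{n≥1} |b_n|² r^{2n} ≤ k² Σ_{n≥1} |a_n|² r^{2n}`. -/
theorem statement13 (k : ℝ) (hk0 : 0 ≤ k) (hk1 : k ≤ 1)
    (h g : ℂ → ℂ) (a b : ℕ → ℂ)
    (hh : ∀ z : ℂ, ‖z‖ < 1 → HasSum (fun n : ℕ => a n * z ^ n) (h z))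
    (hgs : ∀ z : ℂ, ‖z‖ < 1 → HasSum (fun n : ℕ => b n * z ^ n) (g z))
    (hhd : DifferentiableOn ℂ h (Metric.ball (0 : ℂ) 1))
    (hgd : DifferentiableOn ℂ g (Metric.ball (0 : ℂ) 1))
    (hg0 : g 0 = 0)
    (hder : ∀ z : ℂ, ‖z‖ < 1 → ‖deriv g z‖ ≤ k * ‖deriv h z‖) :
    ∀ r : ℝ, 0 ≤ r → r < 1 →
      (∑' n : ℕ, ‖b (n + 1)‖ ^ 2 * r ^ (2 * (n + 1))) ≤
        k ^ 2 * ∑' n : ℕ, ‖a (n + 1)‖ ^ 2 * r ^ (2 * (n + 1)) := by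
  intro r hr0 hr1
  rcases eq_or_lt_of_le hr0 with hr0' | hr0'
  · -- r = 0
    simp only [← hr0']
    have hz : ∀ n : ℕ, (0:ℝ) ^ (2 * (n + 1)) = 0 := fun n => zero_pow (by omega)
    simp only [hz, mul_zero, tsum_zero, mul_zero, le_refl]
  -- r > 0
  set B : ℕ → ℝ := fun n => ‖b (n + 1)‖ ^ 2 with hB
  set A : ℕ → ℝ := fun n => ‖a (n + 1)‖ ^ 2 with hA
  have hBnn : ∀ n, 0 ≤ B n := fun n => sq_nonneg _
  have hAnn : ∀ n, 0 ≤ A n := fun n => sq_nonneg _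
  have hexp : ∀ (x : ℝ) (n : ℕ), x ^ (2 * (n + 1)) = x ^ (2 * n + 2) := by
    intro x n; rw [show 2 * (n + 1) = 2 * n + 2 from by ring]
  -- rewrite goal
  rw [tsum_congr (fun n => by rw [hexp r n] : ∀ n, ‖b (n+1)‖^2 * r ^ (2*(n+1)) = B n * r ^ (2*n+2)),
    tsum_congr (fun n => by rw [hexp r n] : ∀ n, ‖a (n+1)‖^2 * r ^ (2*(n+1)) = A n * r ^ (2*n+2))]
  -- summability facts
  have hsumB2 : ∀ t : ℝ, 0 < t → t < 1 →
      Summable (fun n : ℕ => (2 * (n:ℝ) + 2) * B n * t ^ (2*n+2)) :=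
    fun t h1 h2 => summable_sq_coeff hgs h1 h2
  have hsumA2 : ∀ t : ℝ, 0 < t → t < 1 →
      Summable (fun n : ℕ => (2 * (n:ℝ) + 2) * A n * t ^ (2*n+2)) :=
    fun t h1 h2 => summable_sq_coeff hh h1 h2
  have hsumB : Summable (fun n : ℕ => B n * r ^ (2*n+2)) := by
    refine Summable.of_nonneg_of_le (fun n => mul_nonneg (hBnn n) (by positivity)) (fun n => ?_)
      (hsumB2 r hr0' hr1)
    have h1 : (1:ℝ) ≤ 2 * (n:ℝ) + 2 := by have : (0:ℝ) ≤ (n:ℝ) := Nat.cast_nonneg n; linarith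
    calc B n * r ^ (2*n+2) = 1 * (B n * r ^ (2*n+2)) := (one_mul _).symm
      _ ≤ (2 * (n:ℝ) + 2) * (B n * r ^ (2*n+2)) :=
          mul_le_mul_of_nonneg_right h1 (by positivity)
      _ = (2 * (n:ℝ) + 2) * B n * r ^ (2*n+2) := by ring
  have hsumA : Summable (fun n : ℕ => A n * r ^ (2*n+2)) := by
    refine Summable.of_nonneg_of_le (fun n => mul_nonneg (hAnn n) (by positivity)) (fun n => ?_)
      (hsumA2 r hr0' hr1)
    have h1 : (1:ℝ) ≤ 2 * (n:ℝ) + 2 := by have : (0:ℝ) ≤ (n:ℝ) := Nat.cast_nonneg n; linarith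
    calc A n * r ^ (2*n+2) = 1 * (A n * r ^ (2*n+2)) := (one_mul _).symm
      _ ≤ (2 * (n:ℝ) + 2) * (A n * r ^ (2*n+2)) :=
          mul_le_mul_of_nonneg_right h1 (by positivity)
      _ = (2 * (n:ℝ) + 2) * A n * r ^ (2*n+2) := by ring
  -- inner inequality: for t ∈ (0,1), Fb t ≤ k^2 * Fa t
  have hFle : ∀ t : ℝ, 0 < t → t < 1 →
      (∑' n : ℕ, (2 * (n:ℝ) + 2) * B n * t ^ (2*n+1))
        ≤ ∑' n : ℕ, (2 * (n:ℝ) + 2) * (k^2 * A n) * t ^ (2*n+1) := by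
    intro t ht0 ht1
    -- multiply by t and use the double swap
    have hXY : (∑' n : ℕ, ((2 * (n:ℝ) + 2) * B n) * t ^ (2*n+2))
        ≤ ∑' n : ℕ, (k^2 * ((2 * (n:ℝ) + 2) * A n)) * t ^ (2*n+2) := by
      have hswB := swapL (fun n => (2 * (n:ℝ) + 2) * B n)
        (fun n => mul_nonneg (by positivity) (hBnn n)) ht0 (by
          refine (hsumB2 t ht0 ht1).congr fun n => ?_; ring)
      have hswA := swapL (fun n => k^2 * ((2 * (n:ℝ) + 2) * A n))
        (fun n => mul_nonneg (sq_nonneg k) (mul_nonneg (by positivity) (hAnn n))) ht0 (by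
          refine ((hsumA2 t ht0 ht1).mul_left (k^2)).congr fun n => ?_; ring)
      beta_reduce at hswB hswA
      have hmono : (∫⁻ ρ in Ioo (0:ℝ) t,
            ENNReal.ofReal (∑' n : ℕ, (2 * (n:ℝ) + 2) * ((2 * (n:ℝ) + 2) * B n) * ρ ^ (2*n+1)))
          ≤ ∫⁻ ρ in Ioo (0:ℝ) t,
            ENNReal.ofReal (∑' n : ℕ, (2 * (n:ℝ) + 2) * (k^2 * ((2 * (n:ℝ) + 2) * A n)) * ρ ^ (2*n+1)) := by
        apply lintegral_mono_ae
        filter_upwards [ae_restrict_mem measurableSet_Ioo] with ρ hρ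
        apply ENNReal.ofReal_le_ofReal
        have hρ0 : (0:ℝ) < ρ := hρ.1
        have hρ1 : ρ < 1 := lt_trans hρ.2 ht1
        have hkey := parseval_ineq k hk0 h g a b hh hgs hder hρ0 hρ1
        have e1 : (∑' n : ℕ, (2 * (n:ℝ) + 2) * ((2 * (n:ℝ) + 2) * B n) * ρ ^ (2*n+1))
            = (4 * ρ) * ∑' n : ℕ, ((n:ℝ) + 1)^2 * B n * ρ ^ (2*n) := by
          rw [← tsum_mul_left]
          refine tsum_congr fun n => ?_
          rw [pow_succ]
          ring
        have e2 : (∑' n : ℕ, (2 * (n:ℝ) + 2) * (k^2 * ((2 * (n:ℝ) + 2) * A n)) * ρ ^ (2*n+1))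
            = (4 * ρ) * (k^2 * ∑' n : ℕ, ((n:ℝ) + 1)^2 * A n * ρ ^ (2*n)) := by
          rw [← tsum_mul_left, ← tsum_mul_left]
          refine tsum_congr fun n => ?_
          rw [pow_succ]
          ring
        rw [e1, e2]
        exact mul_le_mul_of_nonneg_left hkey (by positivity)
      rw [hswB, hswA] at hmono
      exact (ENNReal.ofReal_le_ofReal_iff (by
        apply tsum_nonneg
        intro n
        have := hAnn n
        positivity)).mp hmono
    -- divide by t
    have hXt : (∑' n : ℕ, (2 * (n:ℝ) + 2) * B n * t ^ (2*n+1)) * t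
        = ∑' n : ℕ, ((2 * (n:ℝ) + 2) * B n) * t ^ (2*n+2) := by
      rw [← tsum_mul_right]
      exact tsum_congr fun n => by rw [pow_succ]; ring
    have hYt : (∑' n : ℕ, (2 * (n:ℝ) + 2) * (k^2 * A n) * t ^ (2*n+1)) * t
        = ∑' n : ℕ, (k^2 * ((2 * (n:ℝ) + 2) * A n)) * t ^ (2*n+2) := by
      rw [← tsum_mul_right]
      exact tsum_congr fun n => by rw [pow_succ]; ring
    rw [← hXt, ← hYt] at hXY
    exact le_of_mul_le_mul_right hXY ht0
  -- outer swap
  have hswB := swapL B hBnn hr0' hsumB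
  have hswA := swapL (fun n => k^2 * A n) (fun n => mul_nonneg (sq_nonneg k) (hAnn n)) hr0'
    ((hsumA.mul_left (k^2)).congr fun n => by ring)
  beta_reduce at hswA
  have houter : (∫⁻ t in Ioo (0:ℝ) r, ENNReal.ofReal (∑' n : ℕ, (2 * (n:ℝ) + 2) * B n * t ^ (2*n+1)))
      ≤ ∫⁻ t in Ioo (0:ℝ) r, ENNReal.ofReal (∑' n : ℕ, (2 * (n:ℝ) + 2) * (k^2 * A n) * t ^ (2*n+1)) := by
    apply lintegral_mono_ae
    filter_upwards [ae_restrict_mem measurableSet_Ioo] with t ht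
    exact ENNReal.ofReal_le_ofReal (hFle t ht.1 (lt_trans ht.2 hr1))
  rw [hswB, hswA] at houter
  have hfinal := (ENNReal.ofReal_le_ofReal_iff (by
    apply tsum_nonneg
    intro n
    have := hAnn n
    positivity)).mp houter
  calc (∑' n : ℕ, B n * r ^ (2*n+2)) ≤ ∑' n : ℕ, k^2 * A n * r ^ (2*n+2) := hfinal
    _ = k^2 * ∑' n : ℕ, A n * r ^ (2*n+2) := by
        rw [← tsum_mul_left]
        exact tsum_congr fun n => by ring
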